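/- The function G is twice differentiable at y* and its second derivative there equals G″(y*) = φ(y*)·(ρ/√(1−ρ²))·φ(x). In particular G″(y*) < 0 when ρ < 0 and G″(y*) > 0 when ρ > 0. -/

import Mathlib

open MeasureTheory Real

/-- The standard normal density `φ(u) = (2π)^{-1/2} exp(-u²/2)`. -/
noncomputable def stdNormalPDF (u : ℝ) : ℝ := (Real.sqrt (2 * π))⁻¹ * Real.exp (-u ^ 2 / 2)

/-- The standard normal CDF `Φ(x) = ∫_{-∞}^x φ(u) du`. -/
noncomputable def stdNormalCDF (x : ℝ) : ℝ := ∫ u in Set.Iic x, stdNormalPDF u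

/-- `G(y) = Φ(x)Φ(y) − ∫_{−∞}^{y} Φ((x − ρu)/√(1−ρ²)) φ(u) du`. -/
noncomputable def Gfun (ρ x y : ℝ) : ℝ :=
  stdNormalCDF x * stdNormalCDF y
    - ∫ u in Set.Iic y, stdNormalCDF ((x - ρ * u) / Real.sqrt (1 - ρ ^ 2)) * stdNormalPDF u

/-- `y* = x(1 − √(1−ρ²))/ρ`. -/
noncomputable def ystar (ρ x : ℝ) : ℝ := x * (1 - Real.sqrt (1 - ρ ^ 2)) / ρ

lemma phi_pos (u : ℝ) : 0 < stdNormalPDF u := by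
  unfold stdNormalPDF
  positivity

lemma phi_cont : Continuous stdNormalPDF := by
  unfold stdNormalPDF
  fun_prop

lemma phi_integrable : Integrable stdNormalPDF := by
  have h : Integrable (fun u : ℝ => Real.exp (-(1/2 : ℝ) * u ^ 2)) :=
    integrable_exp_neg_mul_sq (by norm_num)
  have : stdNormalPDF = fun u => (Real.sqrt (2 * π))⁻¹ * Real.exp (-(1/2 : ℝ) * u ^ 2) := by
    funext u; unfold stdNormalPDF; ring_nf
  rw [this]
  exact h.const_mul _

lemma integral_phi : ∫ u, stdNormalPDF u = 1 := by
  have h : ∫ u : ℝ, Real.exp (-(1/2 : ℝ) * u ^ 2) = Real.sqrt (π / (1/2)) :=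
    integral_gaussian (1/2)
  have h2 : stdNormalPDF = fun u => (Real.sqrt (2 * π))⁻¹ * Real.exp (-(1/2 : ℝ) * u ^ 2) := by
    funext u; unfold stdNormalPDF; ring_nf
  rw [h2, integral_const_mul, h]
  rw [show π / (1/2 : ℝ) = 2 * π by ring]
  rw [inv_mul_cancel₀]
  positivity

/-- FTC for Iic integrals. -/
lemma hasDerivAt_integral_Iic (f : ℝ → ℝ) (hf : Integrable f) (hc : Continuous f) (y : ℝ) :
    HasDerivAt (fun y => ∫ u in Set.Iic y, f u) (f y) y := by
  have heq : (fun y => ∫ u in Set.Iic y, f u)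
      = fun y => (∫ u in Set.Iic (0:ℝ), f u) + ∫ u in (0:ℝ)..y, f u := by
    funext z
    rw [← intervalIntegral.integral_Iic_sub_Iic hf.integrableOn hf.integrableOn]
    ring
  rw [heq]
  have := intervalIntegral.integral_hasDerivAt_right
    (hc.intervalIntegrable 0 y)
    (hc.stronglyMeasurableAtFilter _ _) hc.continuousAt (a := 0) (b := y)
  simpa using (this.const_add (∫ u in Set.Iic (0:ℝ), f u))

lemma hasDerivAt_cdf (y : ℝ) : HasDerivAt stdNormalCDF (stdNormalPDF y) y :=
  hasDerivAt_integral_Iic _ phi_integrable phi_cont y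

lemma cdf_cont : Continuous stdNormalCDF := by
  have : Differentiable ℝ stdNormalCDF := fun y => (hasDerivAt_cdf y).differentiableAt
  exact this.continuous

lemma cdf_nonneg (t : ℝ) : 0 ≤ stdNormalCDF t :=
  setIntegral_nonneg measurableSet_Iic (fun u _ => (phi_pos u).le)

lemma cdf_le_one (t : ℝ) : stdNormalCDF t ≤ 1 := by
  have := setIntegral_le_integral (s := Set.Iic t) phi_integrable
    (Filter.Eventually.of_forall fun u => (phi_pos u).le)
  rw [integral_phi] at this
  exact this

lemma h_integrable (ρ x : ℝ) :
    Integrable (fun u => stdNormalCDF ((x - ρ * u) / Real.sqrt (1 - ρ ^ 2)) * stdNormalPDF u) := by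
  apply Integrable.mono phi_integrable
  · exact ((cdf_cont.comp (by fun_prop)).mul phi_cont).aestronglyMeasurable
  · refine Filter.Eventually.of_forall fun u => ?_
    rw [Real.norm_eq_abs, Real.norm_eq_abs, abs_of_nonneg (phi_pos u).le,
      abs_of_nonneg (mul_nonneg (cdf_nonneg _) (phi_pos u).le)]
    calc stdNormalCDF _ * stdNormalPDF u ≤ 1 * stdNormalPDF u :=
          mul_le_mul_of_nonneg_right (cdf_le_one _) (phi_pos u).le
      _ = stdNormalPDF u := one_mul _

lemma hasDerivAt_G (ρ x y : ℝ) :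
    HasDerivAt (Gfun ρ x)
      (stdNormalCDF x * stdNormalPDF y
        - stdNormalCDF ((x - ρ * y) / Real.sqrt (1 - ρ ^ 2)) * stdNormalPDF y) y := by
  unfold Gfun
  exact ((hasDerivAt_cdf y).const_mul _).sub
    (hasDerivAt_integral_Iic _ (h_integrable ρ x)
      ((cdf_cont.comp (by fun_prop)).mul phi_cont) y)

lemma hasDerivAt_phi (y : ℝ) : HasDerivAt stdNormalPDF (-y * stdNormalPDF y) y := by
  have h1 : HasDerivAt (fun u : ℝ => -u ^ 2 / 2) (-y) y := by
    have := ((hasDerivAt_pow 2 y).neg).div_const 2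
    simpa using this.congr_deriv (by ring)
  have h2 := (h1.exp).const_mul (Real.sqrt (2 * π))⁻¹
  unfold stdNormalPDF
  exact h2.congr_deriv (by ring)

/-- For `ρ ∈ (−1,1)`, `ρ ≠ 0`, `x ∈ ℝ`: `G` is twice differentiable at
`y*` with `G″(y*) = φ(y*)·(ρ/√(1−ρ²))·φ(x)`; in particular `G″(y*) < 0` when `ρ < 0`
and `G″(y*) > 0` when `ρ > 0`. -/
theorem stmt4 (ρ x : ℝ) (hρ : ρ ∈ Set.Ioo (-1 : ℝ) 1) (hρ0 : ρ ≠ 0) :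
    HasDerivAt (deriv (Gfun ρ x))
        (stdNormalPDF (ystar ρ x) * (ρ / Real.sqrt (1 - ρ ^ 2)) * stdNormalPDF x) (ystar ρ x)
    ∧ (ρ < 0 → stdNormalPDF (ystar ρ x) * (ρ / Real.sqrt (1 - ρ ^ 2)) * stdNormalPDF x < 0)
    ∧ (0 < ρ → 0 < stdNormalPDF (ystar ρ x) * (ρ / Real.sqrt (1 - ρ ^ 2)) * stdNormalPDF x) := by
  obtain ⟨h1, h2⟩ := hρ
  have hs2 : (0:ℝ) < 1 - ρ ^ 2 := by nlinarith
  set s := Real.sqrt (1 - ρ ^ 2) with hs_def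
  have hs : 0 < s := Real.sqrt_pos.mpr hs2
  have hy : ρ * ystar ρ x = x * (1 - s) := by
    unfold ystar; field_simp; rfl
  have hw : (x - ρ * ystar ρ x) / s = x := by
    rw [hy]
    field_simp
    ring
  -- deriv (Gfun ρ x) equals the explicit first derivative
  have hd : deriv (Gfun ρ x) = fun y =>
      stdNormalCDF x * stdNormalPDF y
        - stdNormalCDF ((x - ρ * y) / s) * stdNormalPDF y := by
    funext y; exact (hasDerivAt_G ρ x y).deriv
  constructor
  · rw [hd]
    -- second derivative
    set y := ystar ρ x
    have hphi' : HasDerivAt stdNormalPDF (-y * stdNormalPDF y) y := hasDerivAt_phi y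
    have hwlin : HasDerivAt (fun u : ℝ => (x - ρ * u) / s) (-ρ / s) y := by
      have : HasDerivAt (fun u : ℝ => x - ρ * u) (-ρ) y := by
        simpa using ((hasDerivAt_id y).const_mul ρ).const_sub x
      simpa using this.div_const s
    have hcomp : HasDerivAt (fun u => stdNormalCDF ((x - ρ * u) / s))
        (stdNormalPDF ((x - ρ * y) / s) * (-ρ / s)) y :=
      by have := (hasDerivAt_cdf ((x - ρ * y) / s)).comp y hwlin; exact this
    have hprod := hcomp.mul hphi'
    have hA := (hphi'.const_mul (stdNormalCDF x)).sub hprod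
    refine HasDerivAt.congr_deriv hA ?_
    rw [hw]
    ring
  constructor
  · intro hneg
    have hdiv : ρ / s < 0 := div_neg_of_neg_of_pos hneg hs
    exact mul_neg_of_neg_of_pos
      (mul_neg_of_pos_of_neg (phi_pos _) hdiv) (phi_pos x)
  · intro hpos
    have hdiv : 0 < ρ / s := div_pos hpos hs
    exact mul_pos (mul_pos (phi_pos _) hdiv) (phi_pos x)
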